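/- Let X = X_d ⊂ ℙ(1, a1, a2, a3, a4) be a quasi-smooth Fano 3-fold weighted hypersurface of index 1 (so d = a1 + a2 + a3 + a4) with a1 ≤ a2 ≤ a3 ≤ a4, belonging to one of the 93 singular families (i.e., not the smooth quartic or the degree 6 hypersurface in ℙ(1,1,1,1,3)), and with a2 ≥ 2. Then one of the following holds: (1) d = 2 a4; (2) d = 3 a4; (3) d = 2 a4 + a_j for some j ∈ {1,2,3}. -/

import Mathlib

open MvPolynomial

private lemma aux_val (a1 a2 a3 a4 : ℕ) (i : Fin 5) (h : i ≠ 4) :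
    ![1, a1, a2, a3, a4] i = 1 ∨ ![1, a1, a2, a3, a4] i = a1 ∨
      ![1, a1, a2, a3, a4] i = a2 ∨ ![1, a1, a2, a3, a4] i = a3 := by
  fin_cases i
  · exact Or.inl rfl
  · exact Or.inr (Or.inl rfl)
  · exact Or.inr (Or.inr (Or.inl rfl))
  · exact Or.inr (Or.inr (Or.inr rfl))
  · exact absurd rfl h

private lemma aux_extract {f : MvPolynomial (Fin 5) ℂ}
    (h : MvPolynomial.eval (fun i : Fin 5 => if i = (4 : Fin 5) then 1 else 0) f ≠ 0) :
    ∃ m ∈ f.support, ∀ j : Fin 5, j ≠ 4 → m j = 0 := by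
  by_contra hc
  push_neg at hc
  apply h
  rw [MvPolynomial.eval_eq]
  apply Finset.sum_eq_zero
  intro m hm
  obtain ⟨j, hj4, hj⟩ := hc m hm
  rw [Finset.prod_eq_zero (Finsupp.mem_support_iff.mpr hj)]
  · ring
  · simp [hj4, zero_pow hj]

private lemma aux_extract_pderiv {f : MvPolynomial (Fin 5) ℂ} {i : Fin 5}
    (h : MvPolynomial.eval (fun j : Fin 5 => if j = (4 : Fin 5) then 1 else 0)
      (MvPolynomial.pderiv i f) ≠ 0) :
    ∃ m ∈ f.support, m i ≠ 0 ∧ (∀ j : Fin 5, j ≠ 4 → j ≠ i → m j = 0) ∧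
      (i ≠ 4 → m i = 1) := by
  rw [MvPolynomial.as_sum f, map_sum, map_sum] at h
  obtain ⟨m, hm, hne⟩ := Finset.exists_ne_zero_of_sum_ne_zero h
  rw [MvPolynomial.pderiv_monomial, MvPolynomial.eval_monomial] at hne
  have hkey : ∀ j : Fin 5, j ≠ 4 → (m - Finsupp.single i 1 : Fin 5 →₀ ℕ) j = 0 := by
    intro j hj
    by_contra hz
    apply hne
    rw [Finsupp.prod, Finset.prod_eq_zero (Finsupp.mem_support_iff.mpr hz)]
    · ring
    · rw [if_neg hj]
      exact zero_pow hz
  have hmi : m i ≠ 0 := by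
    intro h0
    exact hne (by simp [h0])
  refine ⟨m, hm, hmi, ?_, ?_⟩
  · intro j hj4 hji
    have := hkey j hj4
    rw [Finsupp.tsub_apply, Finsupp.single_eq_of_ne' (Ne.symm hji)] at this
    omega
  · intro hi4
    have := hkey i hi4
    rw [Finsupp.tsub_apply, Finsupp.single_eq_same] at this
    omega

/-- Lemma: let `X = X_d ⊂ ℙ(1, a₁, a₂, a₃, a₄)`, `a₁ ≤ a₂ ≤ a₃ ≤ a₄`, be a quasi-smooth
Fano 3-fold weighted hypersurface of index 1 (so `d = a₁ + a₂ + a₃ + a₄`), belonging to one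
of the 93 singular families (i.e. with `a₂ ≥ 2`).  Then `d = 2a₄`, or `d = 3a₄`, or
`d = 2a₄ + aⱼ` for some `j ∈ {1,2,3}`.

Formalization: `X` is cut out by a polynomial `f` in 5 variables which is weighted
homogeneous of degree `d` for the weights `(1, a₁, a₂, a₃, a₄)`; quasi-smoothness says the
affine cone is smooth away from the origin.  Well-formedness is `gcd(a₁,a₂,a₃,a₄) = 1`.
That `X` is a Fano 3-fold (terminal singularities) is encoded by its two combinatorial
consequences used here: `a₂ < a₄` (isolated singularities) and, via the classification of
3-dimensional terminal cyclic quotient singularities, if the coordinate point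
`p_w = (0:0:0:0:1)` lies on `X` then `a₄ ∣ aᵢ + aⱼ` for some `i ≠ j ∈ {1,2,3}`. -/
theorem stmt_7 (a1 a2 a3 a4 d : ℕ)
    (ha1 : 0 < a1) (h12 : a1 ≤ a2) (h23 : a2 ≤ a3) (h34 : a3 ≤ a4)
    (ha2 : 2 ≤ a2)
    (hwf : Nat.gcd (Nat.gcd (Nat.gcd a1 a2) a3) a4 = 1)
    (hd : d = a1 + a2 + a3 + a4)
    (f : MvPolynomial (Fin 5) ℂ)
    (hhom : MvPolynomial.IsWeightedHomogeneous ![1, a1, a2, a3, a4] f d)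
    (hqs : ∀ z : Fin 5 → ℂ, z ≠ 0 → MvPolynomial.eval z f = 0 →
      ∃ i : Fin 5, MvPolynomial.eval z (MvPolynomial.pderiv i f) ≠ 0)
    (hiso : a2 < a4)
    (hterm : MvPolynomial.eval (fun i : Fin 5 => if i = (4 : Fin 5) then 1 else 0) f = 0 →
      a4 ∣ a1 + a2 ∨ a4 ∣ a1 + a3 ∨ a4 ∣ a2 + a3) :
    d = 2 * a4 ∨ d = 3 * a4 ∨
      d = 2 * a4 + a1 ∨ d = 2 * a4 + a2 ∨ d = 2 * a4 + a3 := by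
  classical
  have ha4 : 0 < a4 := by omega
  have hlt : ∀ n k : ℕ, n * a4 < k * a4 → n < k := fun n k h =>
    Nat.lt_of_mul_lt_mul_right h
  have key : ∀ m : Fin 5 →₀ ℕ, m ∈ f.support → (∀ j : Fin 5, j ≠ 4 → m j = 0) →
      d = 2 * a4 ∨ d = 3 * a4 := by
    intro m hm hs
    have hm4 : m = Finsupp.single (4 : Fin 5) (m 4) := by
      ext j
      by_cases hj : j = 4
      · subst hj; simp
      · simp [Finsupp.single_apply, Ne.symm hj, hs j hj]
    have hdeg := hhom (MvPolynomial.mem_support_iff.mp hm)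
    rw [hm4] at hdeg
    rw [show (Finsupp.weight ![1, a1, a2, a3, a4]) (Finsupp.single (4 : Fin 5) (m 4))
        = m 4 * a4 by simp [Finsupp.weight_apply, Finsupp.sum_single_index]] at hdeg
    have h1 : 1 * a4 < m 4 * a4 := by omega
    have h2 : m 4 * a4 < 4 * a4 := by omega
    have hb1 := hlt 1 (m 4) h1
    have hb2 := hlt (m 4) 4 h2
    interval_cases h : m 4 <;> omega
  by_cases h : MvPolynomial.eval (fun i : Fin 5 => if i = (4 : Fin 5) then 1 else 0) f = 0
  · obtain ⟨i, hi⟩ := hqs _ (by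
      intro hz
      have := congrFun hz (4 : Fin 5)
      simp at this) h
    obtain ⟨m, hm, hmi, hmj, hmi1⟩ := aux_extract_pderiv hi
    by_cases hi4 : i = 4
    · subst hi4
      rcases key m hm (fun j hj => hmj j hj hj) with h' | h'
      · exact Or.inl h'
      · exact Or.inr (Or.inl h')
    · have hmi1' := hmi1 hi4
      have hmeq : m = Finsupp.single (4 : Fin 5) (m 4) + Finsupp.single i 1 := by
        ext j
        by_cases hj4 : j = 4
        · subst hj4
          simp [Finsupp.single_apply, hi4]
        · by_cases hji : j = i
          · subst hji
            simp [Finsupp.single_apply, Ne.symm hj4, hmi1']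
          · simp [Finsupp.single_apply, Ne.symm hj4, Ne.symm hji, hmj j hj4 hji]
      have hdeg := hhom (MvPolynomial.mem_support_iff.mp hm)
      rw [hmeq, map_add] at hdeg
      rw [show (Finsupp.weight ![1, a1, a2, a3, a4]) (Finsupp.single (4 : Fin 5) (m 4))
          = m 4 * a4 by simp [Finsupp.weight_apply, Finsupp.sum_single_index]] at hdeg
      rw [show (Finsupp.weight ![1, a1, a2, a3, a4]) (Finsupp.single i 1)
          = ![1, a1, a2, a3, a4] i by
            simp [Finsupp.weight_apply, Finsupp.sum_single_index]] at hdeg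
      have hwi : ![1, a1, a2, a3, a4] i = 1 ∨ ![1, a1, a2, a3, a4] i = a1 ∨
          ![1, a1, a2, a3, a4] i = a2 ∨ ![1, a1, a2, a3, a4] i = a3 :=
        aux_val a1 a2 a3 a4 i hi4
      set n := m 4 with hn
      rcases hwi with hwi | hwi | hwi | hwi
      · -- weight 1 : d = n * a4 + 1, use terminality
        rw [hwi] at hdeg
        have h1 : 1 * a4 < n * a4 := by omega
        have h2 : n * a4 < 4 * a4 := by omega
        have hb1 := hlt 1 n h1
        have hb2 := hlt n 4 h2
        rcases hterm h with hdvd | hdvd | hdvd <;>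
        · obtain ⟨k, hk⟩ := hdvd
          have hk0 : k ≠ 0 := by rintro rfl; simp at hk; omega
          have hk2 : a4 * k ≤ a4 * 2 := by omega
          have hk2' : k ≤ 2 := Nat.le_of_mul_le_mul_left hk2 ha4
          interval_cases n <;> interval_cases k <;> omega
      · rw [hwi] at hdeg
        have h1 : 1 * a4 < n * a4 := by omega
        have h2 : n * a4 < 3 * a4 := by omega
        have hb1 := hlt 1 n h1
        have hb2 := hlt n 3 h2
        interval_cases n
        omega
      · rw [hwi] at hdeg
        have h1 : 1 * a4 < n * a4 := by omega
        have h2 : n * a4 < 3 * a4 := by omega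
        have hb1 := hlt 1 n h1
        have hb2 := hlt n 3 h2
        interval_cases n
        omega
      · rw [hwi] at hdeg
        have h1 : 1 * a4 < n * a4 := by omega
        have h2 : n * a4 < 3 * a4 := by omega
        have hb1 := hlt 1 n h1
        have hb2 := hlt n 3 h2
        interval_cases n
        omega
  · obtain ⟨m, hm, hs⟩ := aux_extract h
    rcases key m hm hs with h' | h'
    · exact Or.inl h'
    · exact Or.inr (Or.inl h')
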